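/- For every integer k ≥ 1 and every integer n ≥ 1, n · p_k(1/n) ≤ 1. -/

import Mathlib

def p (k : ℕ) (x : ℝ) : ℝ :=
  ∑ ℓ ∈ Finset.range k, (Nat.choose (2*k-1) ℓ : ℝ) * x^(2*k-1-ℓ) * (1-x)^ℓ

lemma key_nat (K m : ℕ) :
    ∑ ℓ ∈ Finset.range (K+1), Nat.choose (2*K+1) ℓ * m^ℓ ≤ (m+1)^(2*K) := by
  have hrhs : (m+1)^(2*K) = ∑ j ∈ Finset.range (2*K+1), m^j * Nat.choose (2*K) j := by
    rw [add_pow]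
    simp [mul_comm]
  have hsplit : (2*K+1) = (K+1) + K := by omega
  rw [hrhs]
  conv_rhs => rw [hsplit, Finset.sum_range_add]
  rw [Finset.sum_range_succ' (fun ℓ => Nat.choose (2*K+1) ℓ * m^ℓ),
      Finset.sum_range_succ' (fun j => m^j * Nat.choose (2*K) j)]
  simp only [Nat.choose_succ_succ, add_mul, mul_add, Finset.sum_add_distrib, pow_zero,
    Nat.choose_zero_right, mul_one, one_mul, Nat.succ_eq_add_one]
  have hmain : ∑ i ∈ Finset.range K, Nat.choose (2*K) i * m^(i+1) ≤
      ∑ i ∈ Finset.range K, m^(K+1+i) * Nat.choose (2*K) (K+1+i) := by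
    rw [← Finset.sum_range_reflect (fun i => Nat.choose (2*K) i * m^(i+1)) K]
    apply Finset.sum_le_sum
    intro i hi
    rw [Finset.mem_range] at hi
    have h1 : K - 1 - i = 2*K - (K+1+i) := by omega
    have h2 : K+1+i ≤ 2*K := by omega
    rw [h1, Nat.choose_symm h2]
    rcases Nat.eq_zero_or_pos m with hm | hm
    · subst hm
      rw [Nat.zero_pow (by omega)]
      simp
    · rw [mul_comm]
      exact Nat.mul_le_mul (Nat.pow_le_pow_right hm (by omega)) le_rfl
  have h2 : ∑ i ∈ Finset.range K, Nat.choose (2*K) (i+1) * m^(i+1) =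
      ∑ i ∈ Finset.range K, m^(i+1) * Nat.choose (2*K) (i+1) :=
    Finset.sum_congr rfl (fun i _ => mul_comm _ _)
  omega

theorem n_mul_p_le_one (k n : ℕ) (hk : 1 ≤ k) (hn : 1 ≤ n) :
    (n : ℝ) * p k (1 / n) ≤ 1 := by
  have hn0 : (0:ℝ) < n := by exact_mod_cast hn
  have hcast : ((n:ℝ) - 1) = ((n - 1 : ℕ) : ℝ) := by
    rw [Nat.cast_sub hn]; simp
  have hp : p k (1 / n) =
      ((∑ ℓ ∈ Finset.range k, Nat.choose (2*k-1) ℓ * (n-1)^ℓ : ℕ) : ℝ) / (n:ℝ)^(2*k-1) := by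
    unfold p
    push_cast
    rw [Finset.sum_div]
    apply Finset.sum_congr rfl
    intro ℓ hℓ
    rw [Finset.mem_range] at hℓ
    have hle : ℓ ≤ 2*k-1 := by omega
    have hterm : (1/(n:ℝ))^(2*k-1-ℓ) * (1-1/(n:ℝ))^ℓ = ((n:ℝ)-1)^ℓ / (n:ℝ)^(2*k-1) := by
      rw [one_sub_div hn0.ne', div_pow, div_pow, one_pow, div_mul_div_comm, one_mul,
        ← pow_add, Nat.sub_add_cancel hle]
    rw [mul_assoc, hterm, hcast]
    ring
  rw [hp]
  have hpow : (n:ℝ)^(2*k-1) = (n:ℝ)^(2*k-2) * n := by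
    rw [← pow_succ]
    congr 1
    omega
  rw [hpow, div_mul_eq_div_div, mul_div_assoc', mul_comm, mul_div_assoc, div_self hn0.ne', mul_one]
  rw [div_le_one (by positivity)]
  have hK : 2*k-1 = 2*(k-1)+1 ∧ k = (k-1)+1 ∧ 2*k-2 = 2*(k-1) := by omega
  obtain ⟨h1, h2, h3⟩ := hK
  have := key_nat (k-1) (n-1)
  rw [← h1, ← h2, Nat.sub_add_cancel hn, ← h3] at this
  calc ((∑ ℓ ∈ Finset.range k, Nat.choose (2*k-1) ℓ * (n-1)^ℓ : ℕ) : ℝ)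
      ≤ ((n^(2*k-2) : ℕ) : ℝ) := by exact_mod_cast this
    _ = (n:ℝ)^(2*k-2) := by push_cast; ring
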